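/- The function r(α) = (1/2)Ψ(α/2+2) + Ψ(α+9/2) − (1/2)Ψ(α/2+11/2) − Ψ(α+2) satisfies r'(α) < −0.1795 for all α ∈ [0, α*], where α* ≈ 0.56 is the unique positive root in [0,2] of 893α⁴+10367α³+36800α²+32472α−13608 = 0. -/

import Mathlib

open Real Filter Finset Topology

namespace Stmt15

/-- partial sums of trigamma series -/
noncomputable def triSeq (n : ℕ) (x : ℝ) : ℝ := ∑ m ∈ Finset.range (n + 1), ((x + m) ^ 2)⁻¹

/-- derivative of `logGammaSeq` in `x` -/
noncomputable def psiSeq (n : ℕ) (x : ℝ) : ℝ :=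
  Real.log n - ∑ m ∈ Finset.range (n + 1), (x + m)⁻¹

/-- trigamma -/
noncomputable def tri (x : ℝ) : ℝ := ∑' m : ℕ, ((x + m) ^ 2)⁻¹

/-- digamma -/
noncomputable def psi (x : ℝ) : ℝ :=
  -Real.eulerMascheroniConstant + ∑' m : ℕ, (((m : ℝ) + 1)⁻¹ - (x + m)⁻¹)

lemma add_nat_pos {x : ℝ} (hx : 0 < x) (m : ℕ) : 0 < x + m := by positivity

lemma min_bound {x : ℝ} (hx : 0 < x) (m : ℕ) : min x 1 * (m + 1) ≤ x + m := by
  have h1 : min x 1 ≤ x := min_le_left _ _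
  have h2 : min x 1 * m ≤ 1 * m := by
    apply mul_le_mul_of_nonneg_right (min_le_right _ _) (by positivity)
  nlinarith

lemma summable_base : Summable (fun m : ℕ => (((m : ℝ) + 1) ^ 2)⁻¹) := by
  have : Summable (fun m : ℕ => ((m : ℝ) ^ 2)⁻¹) := by
    simpa [one_div] using summable_one_div_nat_pow.mpr (le_refl 2)
  have := (summable_nat_add_iff 1).mpr this
  simpa using this

lemma summable_sq {x : ℝ} (hx : 0 < x) : Summable (fun m : ℕ => ((x + m) ^ 2)⁻¹) := by
  have hc : 0 < min x 1 := lt_min hx one_pos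
  refine Summable.of_nonneg_of_le (fun m => by positivity) (fun m => ?_)
    (summable_base.mul_left (((min x 1) ^ 2)⁻¹))
  · rw [← mul_inv, ← mul_pow]
    apply inv_anti₀ (by positivity)
    apply pow_le_pow_left₀ (by positivity) (min_bound hx m)

lemma psi_term_eq {x : ℝ} (hx : 0 < x) (m : ℕ) :
    ((m : ℝ) + 1)⁻¹ - (x + m)⁻¹ = (x - 1) * (((m : ℝ) + 1) * (x + m))⁻¹ := by
  have h1 : ((m : ℝ) + 1) ≠ 0 := by positivity
  have h2 : (x + m) ≠ 0 := (add_nat_pos hx m).ne'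
  field_simp
  ring

lemma summable_psi_terms {x : ℝ} (hx : 0 < x) :
    Summable (fun m : ℕ => ((m : ℝ) + 1)⁻¹ - (x + m)⁻¹) := by
  have hc : 0 < min x 1 := lt_min hx one_pos
  apply Summable.of_abs
  refine Summable.of_nonneg_of_le (fun m => abs_nonneg _) (fun m => ?_)
    (summable_base.mul_left (|x - 1| * (min x 1)⁻¹))
  · rw [psi_term_eq hx m, abs_mul, abs_of_nonneg (by positivity :
      (0:ℝ) ≤ (((m : ℝ) + 1) * (x + m))⁻¹)]
    rw [mul_assoc]
    apply mul_le_mul_of_nonneg_left _ (abs_nonneg _)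
    rw [← mul_inv, sq]
    apply inv_anti₀ (by positivity)
    calc min x 1 * (((m:ℝ) + 1) * ((m:ℝ) + 1)) = ((m:ℝ)+1) * (min x 1 * ((m:ℝ)+1)) := by ring
      _ ≤ ((m:ℝ)+1) * (x + m) := by
          apply mul_le_mul_of_nonneg_left (min_bound hx m) (by positivity)

end Stmt15
section P2
open Real Filter Finset Topology
namespace Stmt15

lemma shift_unif {F : ℕ → ℝ → ℝ} {f : ℝ → ℝ} {s : Set ℝ}
    (h : TendstoUniformlyOn F f atTop s) :
    TendstoUniformlyOn (fun n => F (n + 1)) f atTop s :=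
  fun u hu => (tendsto_add_atTop_nat 1).eventually (h u hu)

lemma tendstoUniformlyOn_triSeq {a b : ℝ} (ha : 0 < a) :
    TendstoUniformlyOn triSeq tri atTop (Set.Icc a b) := by
  have hc : 0 < min a 1 := lt_min ha one_pos
  have base : TendstoUniformlyOn
      (fun (n : ℕ) (x : ℝ) => ∑ m ∈ Finset.range n, ((x + m) ^ 2)⁻¹)
      (fun x => ∑' m : ℕ, ((x + m) ^ 2)⁻¹) atTop (Set.Icc a b) := by
    apply tendstoUniformlyOn_tsum_nat (summable_base.mul_left (((min a 1) ^ 2)⁻¹))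
    intro m x hx
    rw [Real.norm_eq_abs, abs_of_nonneg (by positivity)]
    rw [← mul_inv, ← mul_pow]
    apply inv_anti₀ (by positivity)
    apply pow_le_pow_left₀ (by positivity)
    calc min a 1 * (m + 1) ≤ min x 1 * (m + 1) := by
          apply mul_le_mul_of_nonneg_right _ (by positivity)
          exact min_le_min hx.1 le_rfl
      _ ≤ x + m := min_bound (ha.trans_le hx.1) m
  exact shift_unif base

lemma part1_tendsto :
    Tendsto (fun n : ℕ => Real.log n - (harmonic (n + 1) : ℝ)) atTop
      (𝓝 (-Real.eulerMascheroniConstant)) := by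
  have h1 : Tendsto (fun n : ℕ => (harmonic n : ℝ) - Real.log n) atTop
      (𝓝 Real.eulerMascheroniConstant) := Real.tendsto_harmonic_sub_log
  have h2 : Tendsto (fun n : ℕ => (harmonic (n + 1) : ℝ) - Real.log n) atTop
      (𝓝 Real.eulerMascheroniConstant) := by
    have h3 : Tendsto (fun n : ℕ => ((n : ℝ) + 1)⁻¹) atTop (𝓝 0) := by
      apply Tendsto.inv_tendsto_atTop
      exact tendsto_atTop_add_const_right _ 1 tendsto_natCast_atTop_atTop
    have := h1.add h3
    rw [add_zero] at this
    apply this.congr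
    intro n
    rw [harmonic_succ]
    push_cast
    ring
  exact h2.neg.congr fun n => by ring

lemma psiSeq_eq (n : ℕ) (x : ℝ) :
    psiSeq n x = (Real.log n - (harmonic (n + 1) : ℝ)) +
      ∑ m ∈ Finset.range (n + 1), (((m : ℝ) + 1)⁻¹ - (x + m)⁻¹) := by
  have hh : (harmonic (n + 1) : ℝ) = ∑ m ∈ Finset.range (n + 1), ((m : ℝ) + 1)⁻¹ := by
    rw [harmonic]
    push_cast
    ring
  rw [psiSeq, hh, Finset.sum_sub_distrib]
  ring

lemma tendstoUniformlyOn_psiSeq {a b : ℝ} (ha : 0 < a) :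
    TendstoUniformlyOn psiSeq psi atTop (Set.Icc a b) := by
  have hc : 0 < min a 1 := lt_min ha one_pos
  set M := max |a - 1| |b - 1| with hM
  have series : TendstoUniformlyOn
      (fun (n : ℕ) (x : ℝ) => ∑ m ∈ Finset.range n, (((m : ℝ) + 1)⁻¹ - (x + m)⁻¹))
      (fun x => ∑' m : ℕ, (((m : ℝ) + 1)⁻¹ - (x + m)⁻¹)) atTop (Set.Icc a b) := by
    apply tendstoUniformlyOn_tsum_nat (summable_base.mul_left (M * (min a 1)⁻¹))
    intro m x hx
    have hxpos : 0 < x := ha.trans_le hx.1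
    rw [Real.norm_eq_abs, psi_term_eq hxpos m, abs_mul,
      abs_of_nonneg (by positivity : (0:ℝ) ≤ (((m : ℝ) + 1) * (x + m))⁻¹)]
    rw [mul_assoc]
    apply mul_le_mul _ _ (by positivity) (by positivity)
    · exact abs_le_max_abs_abs (by linarith [hx.1]) (by linarith [hx.2])
    · rw [← mul_inv, sq]
      apply inv_anti₀ (by positivity)
      calc min a 1 * (((m:ℝ) + 1) * ((m:ℝ) + 1)) = ((m:ℝ)+1) * (min a 1 * ((m:ℝ)+1)) := by ring
        _ ≤ ((m:ℝ)+1) * (x + m) := by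
            apply mul_le_mul_of_nonneg_left _ (by positivity)
            calc min a 1 * ((m:ℝ)+1) ≤ min x 1 * ((m:ℝ)+1) := by
                  apply mul_le_mul_of_nonneg_right _ (by positivity)
                  exact min_le_min hx.1 le_rfl
              _ ≤ x + m := min_bound hxpos m
  have consts : TendstoUniformlyOn
      (fun (n : ℕ) (_ : ℝ) => Real.log n - (harmonic (n + 1) : ℝ))
      (fun _ => -Real.eulerMascheroniConstant) atTop (Set.Icc a b) :=
    part1_tendsto.tendstoUniformlyOn_const _
  have := consts.add (shift_unif series)
  apply this.congr
  filter_upwards with n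
  intro x _
  simp [psiSeq_eq]

lemma tendsto_psiSeq {x : ℝ} (hx : 0 < x) :
    Tendsto (fun n => psiSeq n x) atTop (𝓝 (psi x)) :=
  (tendstoUniformlyOn_psiSeq hx (b := x)).tendsto_at (Set.mem_Icc.mpr ⟨le_rfl, le_rfl⟩)

lemma tlu_of_icc {F : ℕ → ℝ → ℝ} {f : ℝ → ℝ}
    (h : ∀ a b : ℝ, 0 < a → TendstoUniformlyOn F f atTop (Set.Icc a b)) :
    TendstoLocallyUniformlyOn F f atTop (Set.Ioi 0) := by
  rw [tendstoLocallyUniformlyOn_iff_forall_isCompact isOpen_Ioi]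
  intro K hK hKc
  rcases K.eq_empty_or_nonempty with rfl | hne
  · simp [TendstoUniformlyOn]
  have hmem : sInf K ∈ K := hKc.sInf_mem hne
  have hsub : K ⊆ Set.Icc (sInf K) (sSup K) := fun y hy =>
    ⟨csInf_le hKc.bddBelow hy, le_csSup hKc.bddAbove hy⟩
  exact (h _ _ (hK hmem)).mono hsub

lemma tlu_psiSeq : TendstoLocallyUniformlyOn psiSeq psi atTop (Set.Ioi 0) :=
  tlu_of_icc fun _ _ ha => tendstoUniformlyOn_psiSeq ha

lemma tlu_triSeq : TendstoLocallyUniformlyOn triSeq tri atTop (Set.Ioi 0) :=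
  tlu_of_icc fun _ _ ha => tendstoUniformlyOn_triSeq ha

end Stmt15
end P2
section P3
open Real Filter Finset Topology
namespace Stmt15

lemma hasDerivAt_logGammaSeq (n : ℕ) {x : ℝ} (hx : 0 < x) :
    HasDerivAt (fun y => Real.BohrMollerup.logGammaSeq y n) (psiSeq n x) x := by
  have hsum : HasDerivAt (fun y : ℝ => ∑ m ∈ Finset.range (n + 1), Real.log (y + m))
      (∑ m ∈ Finset.range (n + 1), (x + m)⁻¹) x := by
    apply HasDerivAt.fun_sum
    intro m _
    have h1 : HasDerivAt (fun y : ℝ => y + m) 1 x := (hasDerivAt_id x).add_const _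
    have h2 := (Real.hasDerivAt_log (add_nat_pos hx m).ne').comp x h1
    simpa [Function.comp_def] using h2
  have h3 : HasDerivAt (fun y : ℝ => y * Real.log n + Real.log (Nat.factorial n : ℝ)) (Real.log n) x :=
    (hasDerivAt_mul_const (Real.log n)).add_const _
  have h4 := h3.sub hsum
  exact h4

lemma hasDerivAt_psiSeq (n : ℕ) {x : ℝ} (hx : 0 < x) :
    HasDerivAt (psiSeq n) (triSeq n x) x := by
  have hsum : HasDerivAt (fun y : ℝ => ∑ m ∈ Finset.range (n + 1), (y + m)⁻¹)
      (∑ m ∈ Finset.range (n + 1), -((x + m) ^ 2)⁻¹) x := by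
    apply HasDerivAt.fun_sum
    intro m _
    have h1 : HasDerivAt (fun y : ℝ => y + m) 1 x := (hasDerivAt_id x).add_const _
    have h2 := (hasDerivAt_inv (add_nat_pos hx m).ne').comp x h1
    simpa [Function.comp_def] using h2
  have h4 := hsum.const_sub (Real.log n)
  have : -∑ m ∈ Finset.range (n + 1), -((x + m) ^ 2)⁻¹ = triSeq n x := by
    rw [triSeq, ← Finset.sum_neg_distrib]
    simp
  rw [this] at h4
  exact h4

lemma hasDerivAt_logGamma {x : ℝ} (hx : 0 < x) :
    HasDerivAt (fun y => Real.log (Real.Gamma y)) (psi x) x := by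
  apply hasDerivAt_of_tendstoLocallyUniformlyOn isOpen_Ioi tlu_psiSeq
    (f := fun n y => Real.BohrMollerup.logGammaSeq y n)
  · filter_upwards with n
    intro y hy
    exact hasDerivAt_logGammaSeq n hy
  · intro y hy
    exact Real.BohrMollerup.tendsto_log_gamma hy
  · exact hx

lemma gamma_ne_neg_nat {x : ℝ} (hx : 0 < x) : ∀ m : ℕ, x ≠ -m := by
  intro m
  have : (0:ℝ) ≤ m := Nat.cast_nonneg m
  intro h
  rw [h] at hx
  linarith

lemma psi_eq_digamma {x : ℝ} (hx : 0 < x) :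
    deriv Real.Gamma x / Real.Gamma x = psi x := by
  have hΓ : HasDerivAt Real.Gamma (deriv Real.Gamma x) x :=
    (Real.differentiableAt_Gamma (gamma_ne_neg_nat hx)).hasDerivAt
  have hpos := Real.Gamma_pos_of_pos hx
  have hlog := (Real.hasDerivAt_log hpos.ne').comp x hΓ
  have := (hasDerivAt_logGamma hx).unique hlog
  rw [this, div_eq_inv_mul, mul_comm]

lemma hasDerivAt_psi {x : ℝ} (hx : 0 < x) : HasDerivAt psi (tri x) x := by
  apply hasDerivAt_of_tendstoLocallyUniformlyOn isOpen_Ioi tlu_triSeq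
    (f := psiSeq)
  · filter_upwards with n
    intro y hy
    exact hasDerivAt_psiSeq n hy
  · intro y hy
    exact tendsto_psiSeq hy
  · exact hx

lemma hasDerivAt_digamma {x : ℝ} (hx : 0 < x) :
    HasDerivAt (fun y => deriv Real.Gamma y / Real.Gamma y) (tri x) x := by
  apply (hasDerivAt_psi hx).congr_of_eventuallyEq
  filter_upwards [isOpen_Ioi.mem_nhds (Set.mem_Ioi.mpr hx)] with y hy
  exact psi_eq_digamma hy

end Stmt15
end P3
section P4
open Real Filter Finset Topology
namespace Stmt15

lemma tri_anti {x y : ℝ} (hx : 0 < x) (hxy : x ≤ y) : tri y ≤ tri x := by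
  apply Summable.tsum_le_tsum _ (summable_sq (hx.trans_le hxy)) (summable_sq hx)
  intro m
  have h1 : 0 < x + m := add_nat_pos hx m
  apply inv_anti₀ (by positivity)
  apply pow_le_pow_left₀ h1.le (by linarith)

lemma telescope_hasSum {f : ℕ → ℝ} (h0 : Tendsto f atTop (𝓝 0))
    (hnn : ∀ k, 0 ≤ f k - f (k + 1)) : HasSum (fun k => f k - f (k + 1)) (f 0) := by
  rw [hasSum_iff_tendsto_nat_of_nonneg hnn]
  have : ∀ n : ℕ, ∑ i ∈ Finset.range n, (f i - f (i + 1)) = f 0 - f n := fun n =>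
    Finset.sum_range_sub' f n
  simp_rw [this]
  simpa using tendsto_const_nhds.sub h0

lemma tendsto_aux (c : ℝ) : Tendsto (fun k : ℕ => (c + k)⁻¹) atTop (𝓝 0) := by
  apply Tendsto.inv_tendsto_atTop
  exact tendsto_atTop_add_const_left _ c tendsto_natCast_atTop_atTop

lemma hasSum_g {y : ℝ} (hy : 1 < y) :
    HasSum (fun k : ℕ => (y + k - 1/2)⁻¹ - (y + k + 1/2)⁻¹) ((y - 1/2)⁻¹) := by
  have key := telescope_hasSum (f := fun k : ℕ => (y + k - 1/2)⁻¹)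
    ((tendsto_aux (y - 1/2)).congr (fun k => by ring_nf)) ?_
  · have : (fun k : ℕ => (y + k - 1/2)⁻¹ - (y + (k+1 : ℕ) - 1/2)⁻¹) =
        fun k : ℕ => (y + k - 1/2)⁻¹ - (y + k + 1/2)⁻¹ := by
      funext k; push_cast; ring_nf
    rw [this] at key
    simpa using key
  · intro k
    have h1 : (0:ℝ) < y + k - 1/2 := by
      have : (0:ℝ) ≤ k := Nat.cast_nonneg k
      linarith
    have h2 : (0:ℝ) < y + (k+1:ℕ) - 1/2 := by push_cast; linarith
    have h3 : y + k - 1/2 ≤ y + (k+1:ℕ) - 1/2 := by push_cast; linarith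
    have := inv_anti₀ h1 h3
    linarith

lemma hasSum_h {y : ℝ} (hy : 1 < y) :
    HasSum (fun k : ℕ => ((y + k - 1) * (y + k))⁻¹ - ((y + k) * (y + k + 1))⁻¹)
      (((y - 1) * y)⁻¹) := by
  have key := telescope_hasSum (f := fun k : ℕ => ((y + k - 1) * (y + k))⁻¹) ?_ ?_
  · have : (fun k : ℕ => ((y + k - 1) * (y + k))⁻¹ - ((y + (k+1:ℕ) - 1) * (y + (k+1:ℕ)))⁻¹) =
        fun k : ℕ => ((y + k - 1) * (y + k))⁻¹ - ((y + k) * (y + k + 1))⁻¹ := by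
      funext k; push_cast; ring_nf
    rw [this] at key
    simpa using key
  · have h1 : Tendsto (fun k : ℕ => (y - 1 + k)⁻¹ * (y + k)⁻¹) atTop (𝓝 0) := by
      simpa using (tendsto_aux (y - 1)).mul (tendsto_aux y)
    apply h1.congr
    intro k
    rw [← mul_inv]
    ring_nf
  · intro k
    have hk : (0:ℝ) ≤ k := Nat.cast_nonneg k
    have h1 : (0:ℝ) < (y + k - 1) * (y + k) := by nlinarith
    have h2 : (0:ℝ) < (y + (k+1:ℕ) - 1) * (y + (k+1:ℕ)) := by push_cast; nlinarith
    have h3 : (y + k - 1) * (y + k) ≤ (y + (k+1:ℕ) - 1) * (y + (k+1:ℕ)) := by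
      push_cast; nlinarith
    have := inv_anti₀ h1 h3
    linarith

lemma upper_term {a : ℝ} (ha : 1 < a) : ((a:ℝ) ^ 2)⁻¹ ≤ (a - 1/2)⁻¹ - (a + 1/2)⁻¹ := by
  have h1 : (0:ℝ) < a - 1/2 := by linarith
  have h2 : (0:ℝ) < a + 1/2 := by linarith
  rw [inv_sub_inv h1.ne' h2.ne']
  have h3 : a + 1/2 - (a - 1/2) = 1 := by ring
  rw [h3]
  rw [one_div]
  apply inv_anti₀ (by positivity)
  nlinarith

lemma lower_term {y a : ℝ} (hy : 2 < y) (ha : y ≤ a) :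
    (a - 1/2)⁻¹ - (a + 1/2)⁻¹ -
      (4 * (y - 1))⁻¹ * (((a - 1) * a)⁻¹ - (a * (a + 1))⁻¹) ≤ ((a:ℝ) ^ 2)⁻¹ := by
  have ha1 : 1 < a := by linarith
  have h1 : (0:ℝ) < a - 1/2 := by linarith
  have h2 : (0:ℝ) < a + 1/2 := by linarith
  have h3 : (0:ℝ) < a - 1 := by linarith
  have h4 : (0:ℝ) < a + 1 := by linarith
  have h5 : (0:ℝ) < y - 1 := by linarith
  have hgd : (a - 1/2)⁻¹ - (a + 1/2)⁻¹ = ((a - 1/2) * (a + 1/2))⁻¹ := by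
    rw [inv_sub_inv h1.ne' h2.ne']
    rw [show a + 1/2 - (a - 1/2) = 1 by ring, one_div]
  have hhd : ((a - 1) * a)⁻¹ - (a * (a + 1))⁻¹ = 2 * ((a - 1) * a * (a + 1))⁻¹ := by
    rw [inv_sub_inv (by positivity) (by positivity)]
    rw [show a * (a + 1) - (a - 1) * a = 2 * a by ring]
    field_simp
  rw [hgd, hhd]
  rw [sub_le_iff_le_add]
  have key : ((a - 1/2) * (a + 1/2))⁻¹ - (a ^ 2)⁻¹ ≤
      (4 * (y - 1))⁻¹ * (2 * ((a - 1) * a * (a + 1))⁻¹) := by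
    have na : a ≠ 0 := by positivity
    have e1 : ((a - 1/2) * (a + 1/2))⁻¹ - (a ^ 2)⁻¹ =
        1 / (4 * (a ^ 2 * ((a - 1/2) * (a + 1/2)))) := by
      rw [inv_sub_inv (by positivity) (by positivity)]
      rw [show a ^ 2 - (a - 1/2) * (a + 1/2) = 1/4 by ring]
      rw [div_eq_div_iff (by positivity) (by positivity)]
      ring
    have e2 : (4 * (y - 1))⁻¹ * (2 * ((a - 1) * a * (a + 1))⁻¹) =
        2 / (4 * (y - 1) * ((a - 1) * a * (a + 1))) := by
      rw [eq_div_iff (by positivity)]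
      field_simp
    rw [e1, e2, div_le_div_iff₀ (by positivity) (by positivity)]
    have hya : 0 ≤ (a - y) * (a ^ 3 - a) :=
      mul_nonneg (by linarith) (by nlinarith)
    nlinarith [mul_pos (mul_pos h3 (by positivity : (0:ℝ) < a)) h4, sq_nonneg a]
  linarith
end Stmt15
end P4
section P5
open Real Filter Finset Topology
namespace Stmt15

lemma tri_split {x : ℝ} (hx : 0 < x) (N : ℕ) :
    tri x = (∑ m ∈ Finset.range N, ((x + m) ^ 2)⁻¹) + ∑' i : ℕ, ((x + ↑(i + N)) ^ 2)⁻¹ :=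
  (Summable.sum_add_tsum_nat_add N (summable_sq hx)).symm

lemma summable_tail {x : ℝ} (hx : 0 < x) (N : ℕ) :
    Summable (fun i : ℕ => ((x + ↑(i + N)) ^ 2)⁻¹) :=
  (_root_.summable_nat_add_iff (f := fun m : ℕ => ((x + m) ^ 2)⁻¹) N).mpr (summable_sq hx)

lemma tri_le {x : ℝ} (hx : 0 < x) (N : ℕ) (hN : 1 < x + N) :
    tri x ≤ (∑ m ∈ Finset.range N, ((x + m) ^ 2)⁻¹) + (x + N - 1/2)⁻¹ := by
  rw [tri_split hx N]
  apply add_le_add_right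
  have htail : ∑' i : ℕ, ((x + ↑(i + N)) ^ 2)⁻¹ ≤
      ∑' i : ℕ, ((x + N + i - 1/2)⁻¹ - (x + N + i + 1/2)⁻¹) := by
    apply Summable.tsum_le_tsum _ (summable_tail hx N) (hasSum_g hN).summable
    intro i
    have hi : (0:ℝ) ≤ i := Nat.cast_nonneg i
    have h1 : (1:ℝ) < x + N + i := by linarith
    have := upper_term h1
    have he : (x + ↑(i + N) : ℝ) = x + N + i := by push_cast; ring
    rw [he]
    exact this
  rw [(hasSum_g hN).tsum_eq] at htail
  exact htail

lemma tri_ge {x : ℝ} (hx : 0 < x) (N : ℕ) (hN : 2 < x + N) :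
    (∑ m ∈ Finset.range N, ((x + m) ^ 2)⁻¹) + ((x + N - 1/2)⁻¹
      - (4 * (x + N - 1))⁻¹ * ((x + N - 1) * (x + N))⁻¹) ≤ tri x := by
  rw [tri_split hx N]
  apply add_le_add_right
  have hy : (1:ℝ) < x + N := by linarith
  have hφ : HasSum (fun i : ℕ => ((x + N + i - 1/2)⁻¹ - (x + N + i + 1/2)⁻¹)
      - (4 * (x + N - 1))⁻¹ * (((x + N + i - 1) * (x + N + i))⁻¹
        - ((x + N + i) * (x + N + i + 1))⁻¹))
      ((x + N - 1/2)⁻¹ - (4 * (x + N - 1))⁻¹ * ((x + N - 1) * (x + N))⁻¹) :=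
    (hasSum_g hy).sub ((hasSum_h hy).mul_left _)
  rw [← hφ.tsum_eq]
  apply Summable.tsum_le_tsum _ hφ.summable (summable_tail hx N)
  intro i
  have hi : (0:ℝ) ≤ i := Nat.cast_nonneg i
  have := lower_term (y := x + N) (a := x + N + i) hN (by linarith)
  have he : (x + ↑(i + N) : ℝ) = x + N + i := by push_cast; ring
  rw [he]
  exact this

lemma tri_2_le : tri 2 ≤ 3224693/5000000 := by
  have h := tri_le (x := 2) (by norm_num) 25 (by norm_num)
  apply h.trans
  norm_num [Finset.sum_range_succ]

lemma tri_92_le : tri (9/2) ≤ 1243643/5000000 := by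
  have h := tri_le (x := 9/2) (by norm_num) 25 (by norm_num)
  apply h.trans
  norm_num [Finset.sum_range_succ]

lemma tri_l1 : (483699/2500000 : ℝ) ≤ tri (35327/6250) := by
  refine le_trans ?_ (tri_ge (x := 35327/6250) (by norm_num) 25 (by norm_num))
  norm_num [Finset.sum_range_succ]

lemma tri_l2 : (1352987/2500000 : ℝ) ≤ tri (7202/3125) := by
  refine le_trans ?_ (tri_ge (x := 7202/3125) (by norm_num) 25 (by norm_num))
  norm_num [Finset.sum_range_succ]

end Stmt15
end P5

theorem stmt15
    (Ψ r : ℝ → ℝ)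
    (hΨ : Ψ = fun x => deriv Real.Gamma x / Real.Gamma x)
    (hr : r = fun α =>
      (1 / 2) * Ψ (α / 2 + 2) + Ψ (α + 9 / 2) - (1 / 2) * Ψ (α / 2 + 11 / 2) - Ψ (α + 2))
    (αstar : ℝ) (h1 : αstar ∈ Set.Icc (0:ℝ) 2) (h2 : 0 < αstar)
    (h3 : 893 * αstar ^ 4 + 10367 * αstar ^ 3 + 36800 * αstar ^ 2 + 32472 * αstar - 13608 = 0) :
    ∀ α ∈ Set.Icc 0 αstar, deriv r α < -0.1795 := by
  intro α hα
  obtain ⟨hα0, hαs⟩ := hα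
  have hu : αstar ≤ 30464/100000 := by
    by_contra hcon
    push_neg at hcon
    have hq2 : αstar^2 > (30464/100000)^2 := by nlinarith
    have hq3 : αstar^3 > (30464/100000)^3 := by nlinarith
    have hq4 : αstar^4 > (30464/100000)^4 := by nlinarith
    nlinarith
  subst hΨ hr
  have ha2 : (0:ℝ) < α/2 + 2 := by linarith
  have ha92 : (0:ℝ) < α + 9/2 := by linarith
  have ha11 : (0:ℝ) < α/2 + 11/2 := by linarith
  have haa2 : (0:ℝ) < α + 2 := by linarith
  have k1 : HasDerivAt (fun a : ℝ => deriv Real.Gamma (a / 2 + 2) / Real.Gamma (a / 2 + 2))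
      (Stmt15.tri (α/2 + 2) * (1/2)) α := by
    have hin : HasDerivAt (fun a : ℝ => a / 2 + 2) (1/2) α := by
      simpa using ((hasDerivAt_id α).div_const 2).add_const (2:ℝ)
    exact (Stmt15.hasDerivAt_digamma ha2).comp α hin
  have k2 : HasDerivAt (fun a : ℝ => deriv Real.Gamma (a + 9 / 2) / Real.Gamma (a + 9 / 2))
      (Stmt15.tri (α + 9/2) * 1) α := by
    have hin : HasDerivAt (fun a : ℝ => a + 9 / 2) 1 α := (hasDerivAt_id α).add_const _
    exact (Stmt15.hasDerivAt_digamma ha92).comp α hin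
  have k3 : HasDerivAt (fun a : ℝ => deriv Real.Gamma (a / 2 + 11 / 2) / Real.Gamma (a / 2 + 11 / 2))
      (Stmt15.tri (α/2 + 11/2) * (1/2)) α := by
    have hin : HasDerivAt (fun a : ℝ => a / 2 + 11 / 2) (1/2) α := by
      simpa using ((hasDerivAt_id α).div_const 2).add_const ((11:ℝ)/2)
    exact (Stmt15.hasDerivAt_digamma ha11).comp α hin
  have k4 : HasDerivAt (fun a : ℝ => deriv Real.Gamma (a + 2) / Real.Gamma (a + 2))
      (Stmt15.tri (α + 2) * 1) α := by
    have hin : HasDerivAt (fun a : ℝ => a + 2) 1 α := (hasDerivAt_id α).add_const _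
    exact (Stmt15.hasDerivAt_digamma haa2).comp α hin
  have hD := (((k1.const_mul (1/2 : ℝ)).add k2).sub (k3.const_mul (1/2 : ℝ))).sub k4
  refine lt_of_eq_of_lt hD.deriv ?_
  have b1 : Stmt15.tri (α/2 + 2) ≤ Stmt15.tri 2 := Stmt15.tri_anti (by norm_num) (by linarith)
  have b2 : Stmt15.tri (α + 9/2) ≤ Stmt15.tri (9/2) := Stmt15.tri_anti (by norm_num) (by linarith)
  have b3 : Stmt15.tri (35327/6250) ≤ Stmt15.tri (α/2 + 11/2) :=
    Stmt15.tri_anti (by linarith) (by linarith)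
  have b4 : Stmt15.tri (7202/3125) ≤ Stmt15.tri (α + 2) :=
    Stmt15.tri_anti (by linarith) (by linarith)
  have n1 := Stmt15.tri_2_le
  have n2 := Stmt15.tri_92_le
  have n3 := Stmt15.tri_l1
  have n4 := Stmt15.tri_l2
  have goal : (1/2 : ℝ) * (Stmt15.tri (α/2 + 2) * (1/2)) + Stmt15.tri (α + 9/2) * 1
      - 1/2 * (Stmt15.tri (α/2 + 11/2) * (1/2)) - Stmt15.tri (α + 2) * 1 < -0.1795 := by
    rw [show (-0.1795 : ℝ) = -1795/10000 by norm_num]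
    linarith
  exact goal
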